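/- Let λ₂ ≥ 0 and fix ε > 0. Let (β^k)_{k≥0} be a sequence in ℝ^p such that for every k, β^{k+1} is a global minimizer of G_{w(β^k)}. Then the sequence (F_ε(β^k))_{k≥0} is nonincreasing: F_ε(β^{k+1}) ≤ F_ε(β^k) for every k. -/

import Mathlib

/-- Index for the ℓ_r norm with r ∈ {1, 2, ∞}. -/
inductive LrIndex : Type
  | one | two | inf

/-- The ℓ_r norm on ℝ^n for r ∈ {1, 2, ∞}. -/
noncomputable def lrNorm {n : ℕ} (r : LrIndex) (z : Fin n → ℝ) : ℝ :=
  match r with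
  | .one => ∑ j, |z j|
  | .two => Real.sqrt (∑ j, (z j) ^ 2)
  | .inf => ⨆ j, |z j|

/-- `v` is a subgradient of `z ↦ ‖z − y‖_r` at `z₀`. -/
def IsSubgradAt {n : ℕ} (r : LrIndex) (y v z₀ : Fin n → ℝ) : Prop :=
  ∀ z : Fin n → ℝ,
    lrNorm r (z₀ - y) + ∑ j, v j * (z j - z₀ j) ≤ lrNorm r (z - y)

/-- Weighted objective G_w(β) = ‖Xβ − y‖_r + λ₂‖β‖₂² + qλ₁ Σᵢ wᵢ|βᵢ|. -/
noncomputable def objG {n p : ℕ} (r : LrIndex) (X : Matrix (Fin n) (Fin p) ℝ)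
    (y : Fin n → ℝ) (lam1 lam2 q : ℝ) (w : Fin p → ℝ) (β : Fin p → ℝ) : ℝ :=
  lrNorm r (X.mulVec β - y) + lam2 * ∑ i, (β i) ^ 2 + q * lam1 * ∑ i, w i * |β i|

/-- The ε-approximation h_u of t ↦ |t|^q. -/
noncomputable def hApprox (q u t : ℝ) : ℝ :=
  if u ^ (1 / (q - 1)) ≤ |t| then |t| ^ q
  else q * u * |t| + (1 - q) * u ^ (q / (q - 1))

/-- The ε-approximation objective F_ε. -/
noncomputable def objFeps {n p : ℕ} (r : LrIndex) (X : Matrix (Fin n) (Fin p) ℝ)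
    (y : Fin n → ℝ) (lam1 lam2 q ε : ℝ) (β : Fin p → ℝ) : ℝ :=
  lrNorm r (X.mulVec β - y) + lam2 * ∑ i, (β i) ^ 2
    + lam1 * ∑ i, hApprox q ((ε / (p * lam1)) ^ ((q - 1) / q)) (β i)

/-- The weight vector w(β) with w(β)ᵢ = u_ε if βᵢ = 0, and min(u_ε, |βᵢ|^{q−1}) otherwise. -/
noncomputable def weightVec {p : ℕ} (q uε : ℝ) (β : Fin p → ℝ) : Fin p → ℝ :=
  fun i => if β i = 0 then uε else min uε (|β i| ^ (q - 1))

/-- Tangent-line inequality for the concave function `x ↦ x ^ q` on `[0, ∞)`. -/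
lemma tangent_ineq {q a b : ℝ} (hq0 : 0 < q) (hq1 : q < 1) (ha : 0 < a) (hb : 0 ≤ b) :
    b ^ q ≤ a ^ q + q * a ^ (q - 1) * (b - a) := by
  have hs : (-1 : ℝ) ≤ b / a - 1 := by
    have : 0 ≤ b / a := div_nonneg hb ha.le
    linarith
  have h := rpow_one_add_le_one_add_mul_self hs hq0.le hq1.le
  rw [add_sub_cancel] at h
  have h2 := mul_le_mul_of_nonneg_right h (Real.rpow_nonneg ha.le q)
  have hdiv : (b / a) ^ q = b ^ q / a ^ q := Real.div_rpow hb ha.le q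
  have haq : 0 < a ^ q := Real.rpow_pos_of_pos ha q
  have hsub : a ^ (q - 1) = a ^ q / a := by
    rw [Real.rpow_sub ha, Real.rpow_one]
  rw [hdiv, div_mul_cancel₀ _ haq.ne'] at h2
  rw [hsub]
  have : (1 + q * (b / a - 1)) * a ^ q = a ^ q + q * (a ^ q / a) * (b - a) := by
    field_simp
  linarith [this ▸ h2]

/-- The surrogate `t ↦ q·w(s)·|t| + (h_u(s) − q·w(s)·|s|)` majorizes `h_u`. -/
lemma hApprox_majorize {q u : ℝ} (hq0 : 0 < q) (hq1 : q < 1) (hu : 0 < u) (s t : ℝ) :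
    hApprox q u t - q * (if s = 0 then u else min u (|s| ^ (q - 1))) * |t|
      ≤ hApprox q u s - q * (if s = 0 then u else min u (|s| ^ (q - 1))) * |s| := by
  set T : ℝ := u ^ (1 / (q - 1)) with hTdef
  have hq1' : q - 1 ≠ 0 := by linarith
  have hq1n : q - 1 ≤ 0 := by linarith
  have hT : 0 < T := Real.rpow_pos_of_pos hu _
  have hTq1 : T ^ (q - 1) = u := by
    rw [hTdef, ← Real.rpow_mul hu.le, one_div_mul_cancel hq1', Real.rpow_one]
  have hTq : T ^ q = u ^ (q / (q - 1)) := by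
    rw [hTdef, ← Real.rpow_mul hu.le]
    congr 1
    field_simp
  have hTT : T ^ (q - 1) * T = T ^ q := by
    have := Real.rpow_add_one hT.ne' (q - 1)
    rw [sub_add_cancel] at this
    rw [this]
  have e1 : q * (T ^ (q - 1) * T) = q * T ^ q := by rw [hTT]
  by_cases hs : T ≤ |s|
  · have hs0 : s ≠ 0 := by
      intro h; rw [h, abs_zero] at hs; linarith
    have hsp : 0 < |s| := abs_pos.mpr hs0
    have hmin : |s| ^ (q - 1) ≤ u := by
      rw [← hTq1]; exact Real.rpow_le_rpow_of_nonpos hT hs hq1n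
    have hss : |s| ^ (q - 1) * |s| = |s| ^ q := by
      have := Real.rpow_add_one hsp.ne' (q - 1)
      rw [sub_add_cancel] at this
      rw [this]
    rw [if_neg hs0, min_eq_right hmin]
    have hSa : hApprox q u s = |s| ^ q := if_pos hs
    rw [hSa]
    by_cases ht : T ≤ |t|
    · have hTa : hApprox q u t = |t| ^ q := if_pos ht
      rw [hTa]
      have := tangent_ineq hq0 hq1 hsp (abs_nonneg t)
      nlinarith [hss]
    · have hTa : hApprox q u t = q * u * |t| + (1 - q) * u ^ (q / (q - 1)) := if_neg ht
      rw [hTa, ← hTq, ← hTq1]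
      have htan := tangent_ineq hq0 hq1 hsp (le_of_lt hT)
      have htT : |t| ≤ T := le_of_not_ge ht
      have hwu : |s| ^ (q - 1) ≤ T ^ (q - 1) := hTq1 ▸ hmin
      have h3 : q * (T ^ (q - 1) - |s| ^ (q - 1)) * |t|
          ≤ q * (T ^ (q - 1) - |s| ^ (q - 1)) * T :=
        mul_le_mul_of_nonneg_left htT (mul_nonneg hq0.le (sub_nonneg.mpr hwu))
      nlinarith [htan, hss, e1, h3]
  · have hw : (if s = 0 then u else min u (|s| ^ (q - 1))) = u := by
      by_cases hs0 : s = 0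
      · rw [if_pos hs0]
      · rw [if_neg hs0]
        have hsp : 0 < |s| := abs_pos.mpr hs0
        have : u ≤ |s| ^ (q - 1) := by
          rw [← hTq1]; exact Real.rpow_le_rpow_of_nonpos hsp (le_of_not_ge hs) hq1n
        exact min_eq_left this
    rw [hw]
    have hSa : hApprox q u s = q * u * |s| + (1 - q) * u ^ (q / (q - 1)) := if_neg hs
    rw [hSa, ← hTq]
    by_cases ht : T ≤ |t|
    · have hTa : hApprox q u t = |t| ^ q := if_pos ht
      rw [hTa, ← hTq1]
      have := tangent_ineq hq0 hq1 hT (abs_nonneg t)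
      nlinarith [this, e1]
    · have hTa : hApprox q u t = q * u * |t| + (1 - q) * u ^ (q / (q - 1)) := if_neg ht
      rw [hTa, ← hTq]
      linarith

/-- along the reweighted iterates, (F_ε(β^k)) is nonincreasing. -/
theorem Feps_nonincreasing {n p : ℕ} (hn : 0 < n) (hp : 0 < p)
    (r : LrIndex) (X : Matrix (Fin n) (Fin p) ℝ) (y : Fin n → ℝ)
    (lam1 lam2 q ε : ℝ) (hlam1 : 0 < lam1) (hlam2 : 0 ≤ lam2)
    (hq0 : 0 < q) (hq1 : q < 1) (hε : 0 < ε)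
    (βseq : ℕ → Fin p → ℝ)
    (hseq : ∀ k : ℕ, ∀ β : Fin p → ℝ,
      objG r X y lam1 lam2 q
          (weightVec q ((ε / (p * lam1)) ^ ((q - 1) / q)) (βseq k)) (βseq (k + 1))
        ≤ objG r X y lam1 lam2 q
          (weightVec q ((ε / (p * lam1)) ^ ((q - 1) / q)) (βseq k)) β) :
    ∀ k : ℕ,
      objFeps r X y lam1 lam2 q ε (βseq (k + 1)) ≤ objFeps r X y lam1 lam2 q ε (βseq k) := by
  intro k
  set u : ℝ := (ε / (p * lam1)) ^ ((q - 1) / q) with hudef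
  have hpR : (0 : ℝ) < (p : ℝ) := by exact_mod_cast hp
  have hu : 0 < u := Real.rpow_pos_of_pos (div_pos hε (mul_pos hpR hlam1)) _
  set w : Fin p → ℝ := weightVec q u (βseq k) with hwdef
  have hG := hseq k (βseq k)
  have hmaj : ∀ i, hApprox q u (βseq (k + 1) i) - q * w i * |βseq (k + 1) i|
      ≤ hApprox q u (βseq k i) - q * w i * |βseq k i| := by
    intro i
    have h := hApprox_majorize hq0 hq1 hu (βseq k i) (βseq (k + 1) i)
    simpa [hwdef, weightVec] using h
  have hsum : ∑ i, (hApprox q u (βseq (k + 1) i) - q * w i * |βseq (k + 1) i|)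
      ≤ ∑ i, (hApprox q u (βseq k i) - q * w i * |βseq k i|) :=
    Finset.sum_le_sum fun i _ => hmaj i
  rw [Finset.sum_sub_distrib, Finset.sum_sub_distrib] at hsum
  have hkey := mul_le_mul_of_nonneg_left hsum hlam1.le
  rw [mul_sub, mul_sub] at hkey
  have eqw : ∀ β : Fin p → ℝ,
      lam1 * ∑ i, q * w i * |β i| = q * lam1 * ∑ i, w i * |β i| := by
    intro β
    rw [Finset.mul_sum, Finset.mul_sum]
    exact Finset.sum_congr rfl fun i _ => by ring
  rw [eqw, eqw] at hkey
  simp only [objFeps, objG] at hG ⊢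
  rw [hwdef, hudef] at hkey
  rw [hudef] at hG
  linarith [hG, hkey]
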